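/- arXiv:2006.07568 — 5 statements merged into one kernel-verified Lean document; each statement's English description precedes it below -/
import Mathlib

section
/- Let (x_0, y_0, s_0) and (x_k, y_k, s_k) be primal-dual feasible with x_0, s_0, x_k, s_k > 0 and x_kᵀ s_k ≤ n μ_0 where μ_0 = x_0ᵀ s_0 / n. Then for each component i, x_kᵢ ≤ 2n μ_0 / (min_j s_0ʲ) and s_kᵢ ≤ 2n μ_0 / (min_j x_0ʲ). -/
/-- Upper bounds on feasible iterates: if `(x_0, y_0, s_0)` and `(x_k, y_k, s_k)` are
primal-dual feasible, strictly positive, and `x_kᵀs_k ≤ n μ_0`, then componentwise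
`x_kᵢ ≤ 2nμ_0 / min_j s_0ʲ` and `s_kᵢ ≤ 2nμ_0 / min_j x_0ʲ`. -/
theorem lp_iterates_upper_bound {m n : ℕ} [NeZero n] (A : Matrix (Fin m) (Fin n) ℝ)
    (b : Fin m → ℝ) (c : Fin n → ℝ)
    (x0 xk s0 sk : Fin n → ℝ) (y0 yk : Fin m → ℝ) (μ0 : ℝ)
    (h0pos : ∀ i, 0 < x0 i ∧ 0 < s0 i) (hkpos : ∀ i, 0 < xk i ∧ 0 < sk i)
    (hp0 : A.mulVec x0 = b) (hd0 : A.transpose.mulVec y0 + s0 = c)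
    (hpk : A.mulVec xk = b) (hdk : A.transpose.mulVec yk + sk = c)
    (hμ0 : μ0 = dotProduct x0 s0 / n)
    (hle : dotProduct xk sk ≤ n * μ0) :
    ∀ i, xk i ≤ 2 * n * μ0 / Finset.univ.inf' Finset.univ_nonempty s0 ∧
      sk i ≤ 2 * n * μ0 / Finset.univ.inf' Finset.univ_nonempty x0 := by
  have hn : (0:ℝ) < n := Nat.cast_pos.mpr (Nat.pos_of_ne_zero (NeZero.ne n))
  have hA : A.mulVec (xk - x0) = 0 := by
    rw [Matrix.mulVec_sub, hp0, hpk, sub_self]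
  have hAt : A.transpose.mulVec (yk - y0) = s0 - sk := by
    have h := hdk.trans hd0.symm
    rw [Matrix.mulVec_sub]
    funext i
    have := congrFun h i
    simp [Pi.add_apply] at this
    simp [Pi.sub_apply]
    linarith
  have horth : dotProduct (s0 - sk) (xk - x0) = 0 := by
    calc dotProduct (s0 - sk) (xk - x0)
        = dotProduct (A.transpose.mulVec (yk - y0)) (xk - x0) := by rw [hAt]
      _ = dotProduct (Matrix.vecMul (yk - y0) A) (xk - x0) := by
          rw [Matrix.mulVec_transpose]
      _ = dotProduct (yk - y0) (A.mulVec (xk - x0)) := by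
          rw [Matrix.dotProduct_mulVec]
      _ = 0 := by rw [hA, dotProduct_zero]
  have hexp : dotProduct s0 xk + dotProduct sk x0
      = dotProduct s0 x0 + dotProduct sk xk := by
    have := horth
    simp only [sub_dotProduct, dotProduct_sub] at this
    linarith
  have hμ : dotProduct x0 s0 = n * μ0 := by
    rw [hμ0]; field_simp
  have hcomm1 : dotProduct s0 x0 = dotProduct x0 s0 :=
    dotProduct_comm _ _
  have hcomm2 : dotProduct sk xk = dotProduct xk sk :=
    dotProduct_comm _ _
  have hs0xk_nonneg : 0 ≤ dotProduct s0 xk :=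
    Finset.sum_nonneg fun j _ => le_of_lt (mul_pos (h0pos j).2 (hkpos j).1)
  have hskx0_nonneg : 0 ≤ dotProduct sk x0 :=
    Finset.sum_nonneg fun j _ => le_of_lt (mul_pos (hkpos j).2 (h0pos j).1)
  have h1 : dotProduct s0 xk ≤ 2 * n * μ0 := by linarith
  have h2 : dotProduct sk x0 ≤ 2 * n * μ0 := by linarith
  intro i
  have hinfs : (0:ℝ) < Finset.univ.inf' Finset.univ_nonempty s0 :=
    (Finset.lt_inf'_iff _).mpr fun j _ => (h0pos j).2
  have hinfx : (0:ℝ) < Finset.univ.inf' Finset.univ_nonempty x0 :=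
    (Finset.lt_inf'_iff _).mpr fun j _ => (h0pos j).1
  constructor
  · rw [le_div_iff₀ hinfs]
    have hle1 : xk i * Finset.univ.inf' Finset.univ_nonempty s0 ≤ s0 i * xk i := by
      rw [mul_comm (s0 i)]
      exact mul_le_mul_of_nonneg_left
        (Finset.inf'_le _ (Finset.mem_univ i)) (le_of_lt (hkpos i).1)
    have hle2 : s0 i * xk i ≤ dotProduct s0 xk :=
      Finset.single_le_sum
        (fun j _ => le_of_lt (mul_pos (h0pos j).2 (hkpos j).1))
        (Finset.mem_univ i)
    linarith
  · rw [le_div_iff₀ hinfx]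
    have hle1 : sk i * Finset.univ.inf' Finset.univ_nonempty x0 ≤ sk i * x0 i :=
      mul_le_mul_of_nonneg_left
        (Finset.inf'_le _ (Finset.mem_univ i)) (le_of_lt (hkpos i).2)
    have hle2 : sk i * x0 i ≤ dotProduct sk x0 :=
      Finset.single_le_sum
        (fun j _ => le_of_lt (mul_pos (hkpos j).2 (h0pos j).1))
        (Finset.mem_univ i)
    linarith
end

section
/- Under the hypotheses of the previous lemma, if additionally the proximity condition x_kᵢ s_kᵢ ≥ γ μ_k holds for all i and μ_k ≥ C_μ > 0, then min_i min(x_kᵢ, s_kᵢ) ≥ γ C_μ / C_max, where C_max = max(2n μ_0 / min_j s_0ʲ, 2n μ_0 / min_j x_0ʲ). -/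
/-- Lower bounds on feasible iterates: under the hypotheses of the upper-bound lemma,
if additionally `x_kᵢ s_kᵢ ≥ γ μ_k` for all `i` and `μ_k ≥ C_μ > 0`, then
`min_i min(x_kᵢ, s_kᵢ) ≥ γ C_μ / C_max`. -/
theorem lp_iterates_lower_bound {m n : ℕ} [NeZero n] (A : Matrix (Fin m) (Fin n) ℝ)
    (b : Fin m → ℝ) (c : Fin n → ℝ)
    (x0 xk s0 sk : Fin n → ℝ) (y0 yk : Fin m → ℝ) (μ0 μk γ Cμ Cmax : ℝ)
    (h0pos : ∀ i, 0 < x0 i ∧ 0 < s0 i) (hkpos : ∀ i, 0 < xk i ∧ 0 < sk i)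
    (hp0 : A.mulVec x0 = b) (hd0 : A.transpose.mulVec y0 + s0 = c)
    (hpk : A.mulVec xk = b) (hdk : A.transpose.mulVec yk + sk = c)
    (hμ0 : μ0 = dotProduct x0 s0 / n)
    (hμk : μk = dotProduct xk sk / n)
    (hle : μk ≤ μ0)
    (hγ : 0 < γ ∧ γ < 1)
    (hprox : ∀ i, γ * μk ≤ xk i * sk i)
    (hCμ : 0 < Cμ) (hμlb : Cμ ≤ μk)
    (hCmax : Cmax = max (2 * n * μ0 / Finset.univ.inf' Finset.univ_nonempty s0)
      (2 * n * μ0 / Finset.univ.inf' Finset.univ_nonempty x0)) :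
    ∀ i, γ * Cμ / Cmax ≤ min (xk i) (sk i) := by
  have hn : (0:ℝ) < n := by
    exact_mod_cast Nat.pos_of_ne_zero (NeZero.ne n)
  have hμkpos : 0 < μk := lt_of_lt_of_le hCμ hμlb
  have hμ0pos : 0 < μ0 := lt_of_lt_of_le hμkpos hle
  set S := Finset.univ.inf' Finset.univ_nonempty s0 with hSdef
  set X := Finset.univ.inf' Finset.univ_nonempty x0 with hXdef
  have hS : 0 < S := by
    rw [hSdef, Finset.lt_inf'_iff]; intro i _; exact (h0pos i).2
  have hX : 0 < X := by
    rw [hXdef, Finset.lt_inf'_iff]; intro i _; exact (h0pos i).1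
  -- orthogonality
  have hAx : A.mulVec (x0 - xk) = 0 := by
    rw [Matrix.mulVec_sub, hp0, hpk, sub_self]
  have hsd : s0 - sk = A.transpose.mulVec (yk - y0) := by
    rw [Matrix.mulVec_sub]
    funext i
    have h0 := congrFun hd0 i
    have hk := congrFun hdk i
    simp only [Pi.add_apply, Pi.sub_apply] at h0 hk ⊢
    linarith
  have horth : dotProduct (x0 - xk) (s0 - sk) = 0 := by
    rw [hsd, Matrix.dotProduct_mulVec, Matrix.vecMul_transpose, hAx,
      zero_dotProduct]
  have hexp : dotProduct x0 sk + dotProduct xk s0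
      = dotProduct x0 s0 + dotProduct xk sk := by
    rw [sub_dotProduct, dotProduct_sub, dotProduct_sub] at horth
    linarith
  have hd00 : dotProduct x0 s0 = n * μ0 := by
    rw [hμ0]; field_simp
  have hdkk : dotProduct xk sk = n * μk := by
    rw [hμk]; field_simp
  have hdot_nonneg : ∀ (u v : Fin n → ℝ), (∀ i, 0 < u i) → (∀ i, 0 < v i) →
      ∀ i, u i * v i ≤ dotProduct u v := by
    intro u v hu hv i
    exact Finset.single_le_sum (fun j _ => le_of_lt (mul_pos (hu j) (hv j)))
      (Finset.mem_univ i)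
  have h2n : dotProduct x0 sk + dotProduct xk s0 ≤ 2 * n * μ0 := by
    rw [hexp, hd00, hdkk]; nlinarith
  have hx0sk : 0 ≤ dotProduct x0 sk :=
    Finset.sum_nonneg fun i _ => le_of_lt (mul_pos (h0pos i).1 (hkpos i).2)
  have hxks0 : 0 ≤ dotProduct xk s0 :=
    Finset.sum_nonneg fun i _ => le_of_lt (mul_pos (hkpos i).1 (h0pos i).2)
  have hCmaxpos : 0 < Cmax := by
    rw [hCmax]
    exact lt_max_of_lt_left (div_pos (by nlinarith) hS)
  -- upper bounds
  have hxub : ∀ i, xk i ≤ Cmax := by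
    intro i
    have h1 : S * xk i ≤ xk i * s0 i := by
      have : S ≤ s0 i := Finset.inf'_le _ (Finset.mem_univ i)
      nlinarith [(hkpos i).1]
    have h2 : xk i * s0 i ≤ 2 * n * μ0 := by
      have := hdot_nonneg xk s0 (fun j => (hkpos j).1) (fun j => (h0pos j).2) i
      linarith
    have : xk i ≤ 2 * n * μ0 / S := by
      rw [le_div_iff₀ hS]; linarith [mul_comm (xk i) S, h1, h2]
    calc xk i ≤ 2 * n * μ0 / S := this
      _ ≤ Cmax := by rw [hCmax]; exact le_max_left _ _
  have hsub : ∀ i, sk i ≤ Cmax := by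
    intro i
    have h1 : X * sk i ≤ x0 i * sk i := by
      have : X ≤ x0 i := Finset.inf'_le _ (Finset.mem_univ i)
      nlinarith [(hkpos i).2]
    have h2 : x0 i * sk i ≤ 2 * n * μ0 := by
      have := hdot_nonneg x0 sk (fun j => (h0pos j).1) (fun j => (hkpos j).2) i
      linarith
    have : sk i ≤ 2 * n * μ0 / X := by
      rw [le_div_iff₀ hX]; linarith [mul_comm (sk i) X, h1, h2]
    calc sk i ≤ 2 * n * μ0 / X := this
      _ ≤ Cmax := by rw [hCmax]; exact le_max_right _ _
  intro i
  have hγCμ : γ * Cμ ≤ xk i * sk i := by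
    have := hprox i
    nlinarith [hγ.1]
  rw [div_le_iff₀ hCmaxpos]
  rcases le_total (xk i) (sk i) with h | h
  · rw [min_eq_left h]
    calc γ * Cμ ≤ xk i * sk i := hγCμ
      _ ≤ xk i * Cmax := mul_le_mul_of_nonneg_left (hsub i) (le_of_lt (hkpos i).1)
  · rw [min_eq_right h]
    calc γ * Cμ ≤ xk i * sk i := hγCμ
      _ ≤ Cmax * sk i := mul_le_mul_of_nonneg_right (hxub i) (le_of_lt (hkpos i).2)
      _ = sk i * Cmax := mul_comm _ _
end

section
/- Under bounds C_min ≤ x_i, s_i ≤ C_max for all i and the Schur complement equation A X S^{-1} Aᵀ Δy = −A S^{-1}(X S e − σ μ e) with feasible residuals zero, the solution satisfies ||Δy|| ≤ (C_max λ_max / (C_min² λ_min²)) (1+σ) n μ, where λ_min, λ_max are the smallest and largest singular values of A and μ = xᵀs/n. -/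
/-- Bound on the Newton step component `Δy`: under componentwise bounds
`C_min ≤ xᵢ, sᵢ ≤ C_max` and the Schur complement equation
`A X S⁻¹ Aᵀ Δy = −A S⁻¹(XSe − σμe)`, one has
`‖Δy‖ ≤ (C_max λ_max / (C_min² λ_min²)) (1+σ) n μ`. -/
theorem newton_dy_bound {m n : ℕ} (A : Matrix (Fin m) (Fin n) ℝ)
    (x s : Fin n → ℝ) (dy : Fin m → ℝ)
    (Cmin Cmax lammin lammax σ μ : ℝ)
    (hCmin : 0 < Cmin) (hCC : Cmin ≤ Cmax)
    (hx : ∀ i, Cmin ≤ x i ∧ x i ≤ Cmax) (hs : ∀ i, Cmin ≤ s i ∧ s i ≤ Cmax)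
    (hσ : 0 < σ ∧ σ ≤ 1) (hμ : μ = dotProduct x s / n)
    (hlmin : 0 < lammin)
    (hsing1 : ∀ z : Fin m → ℝ, lammin ^ 2 * dotProduct z z ≤
      dotProduct (A.transpose.mulVec z) (A.transpose.mulVec z))
    (hsing2 : ∀ v : Fin n → ℝ, Real.sqrt (dotProduct (A.mulVec v) (A.mulVec v)) ≤
      lammax * Real.sqrt (dotProduct v v))
    (heq : (A * Matrix.diagonal x * Matrix.diagonal (fun i => (s i)⁻¹)
        * A.transpose).mulVec dy
      = - A.mulVec (fun i => (x i * s i - σ * μ) / s i)) :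
    Real.sqrt (dotProduct dy dy) ≤
      Cmax * lammax / (Cmin ^ 2 * lammin ^ 2) * (1 + σ) * n * μ := by
  have hCmax : 0 < Cmax := lt_of_lt_of_le hCmin hCC
  set v : Fin n → ℝ := fun i => (x i * s i - σ * μ) / s i with hv
  set u : Fin n → ℝ := A.transpose.mulVec dy with hu
  set t : ℝ := dotProduct dy dy with ht
  have htnn : 0 ≤ t := Finset.sum_nonneg fun i _ => mul_self_nonneg (dy i)
  set a : ℝ := Real.sqrt t with ha
  have hann : 0 ≤ a := Real.sqrt_nonneg t
  have ha2 : a ^ 2 = t := Real.sq_sqrt htnn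
  have hspos : ∀ i, 0 < s i := fun i => lt_of_lt_of_le hCmin (hs i).1
  have hxpos : ∀ i, 0 < x i := fun i => lt_of_lt_of_le hCmin (hx i).1
  have hxs_nonneg : 0 ≤ dotProduct x s :=
    Finset.sum_nonneg fun i _ => le_of_lt (mul_pos (hxpos i) (hspos i))
  have hμnn : 0 ≤ μ := by rw [hμ]; positivity
  have hnμ : (n : ℝ) * μ = dotProduct x s := by
    rcases Nat.eq_zero_or_pos n with h0 | h0
    · subst h0; simp [hμ, dotProduct]
    · rw [hμ]; field_simp
  -- quadratic form equality
  have hmv : (A * Matrix.diagonal x * Matrix.diagonal (fun i => (s i)⁻¹)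
      * A.transpose).mulVec dy
      = A.mulVec (fun i => x i * (s i)⁻¹ * u i) := by
    rw [← Matrix.mulVec_mulVec dy (A * Matrix.diagonal x * Matrix.diagonal fun i => (s i)⁻¹)
        A.transpose,
      ← Matrix.mulVec_mulVec (A.transpose.mulVec dy) (A * Matrix.diagonal x)
        (Matrix.diagonal fun i => (s i)⁻¹),
      ← Matrix.mulVec_mulVec _ A (Matrix.diagonal x)]
    have hw : (Matrix.diagonal x).mulVec
        ((Matrix.diagonal fun i => (s i)⁻¹).mulVec (A.transpose.mulVec dy))
        = fun i => x i * (s i)⁻¹ * u i := by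
      funext i
      simp only [Matrix.mulVec_diagonal, hu]
      ring
    rw [hw]
  have hquad : dotProduct dy ((A * Matrix.diagonal x
      * Matrix.diagonal (fun i => (s i)⁻¹) * A.transpose).mulVec dy)
      = ∑ i, x i * (s i)⁻¹ * u i ^ 2 := by
    rw [hmv, Matrix.dotProduct_mulVec, ← Matrix.mulVec_transpose, ← hu]
    rw [dotProduct]
    exact Finset.sum_congr rfl fun i _ => by ring
  -- lower bound on the quadratic form
  have hlow : Cmin / Cmax * (lammin ^ 2 * t)
      ≤ ∑ i, x i * (s i)⁻¹ * u i ^ 2 := by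
    have h1 : Cmin / Cmax * dotProduct u u ≤ ∑ i, x i * (s i)⁻¹ * u i ^ 2 := by
      rw [dotProduct, Finset.mul_sum]
      refine Finset.sum_le_sum fun i _ => ?_
      have hratio : Cmin / Cmax ≤ x i * (s i)⁻¹ := by
        rw [← div_eq_mul_inv]
        exact div_le_div₀ (le_of_lt (hxpos i)) (hx i).1 (hspos i) (hs i).2
      calc Cmin / Cmax * (u i * u i) = Cmin / Cmax * u i ^ 2 := by ring
        _ ≤ x i * (s i)⁻¹ * u i ^ 2 :=
          mul_le_mul_of_nonneg_right hratio (sq_nonneg (u i))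
    refine le_trans ?_ h1
    exact mul_le_mul_of_nonneg_left (hsing1 dy) (by positivity)
  -- degenerate case n = 0
  rcases Nat.eq_zero_or_pos n with h0 | h0
  · subst h0
    have hQ0 : (∑ i, x i * (s i)⁻¹ * u i ^ 2) = (0:ℝ) := by simp
    rw [hQ0] at hlow
    have ht0 : t = 0 := by
      refine le_antisymm ?_ htnn
      by_contra h
      push_neg at h
      have := mul_pos (div_pos hCmin hCmax) (mul_pos (pow_pos hlmin 2) h)
      linarith
    have ha0 : a = 0 := by rw [ha, ht0, Real.sqrt_zero]
    rw [ha0]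
    simp
  -- now n > 0 : lammax nonneg
  have hnpos : (0:ℝ) < n := by exact_mod_cast h0
  have hlmax : 0 ≤ lammax := by
    have := hsing2 (Pi.single ⟨0, h0⟩ 1)
    have hdot : dotProduct (Pi.single (⟨0, h0⟩ : Fin n) (1:ℝ))
        (Pi.single ⟨0, h0⟩ 1) = 1 := by
      simp [dotProduct, Pi.single_apply]
    rw [hdot, Real.sqrt_one, mul_one] at this
    exact le_trans (Real.sqrt_nonneg _) this
  -- Cauchy-Schwarz
  have hCS : dotProduct dy (- A.mulVec v)
      ≤ a * Real.sqrt (dotProduct (A.mulVec v) (A.mulVec v)) := by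
    have h := Real.sum_mul_le_sqrt_mul_sqrt Finset.univ dy (fun i => - A.mulVec v i)
    have e1 : dotProduct dy (- A.mulVec v)
        = ∑ i, dy i * (fun i => - A.mulVec v i) i := by
      simp [dotProduct]
    have e2 : Real.sqrt (∑ i, dy i ^ 2) = a := by
      rw [ha, ht, dotProduct]
      exact congrArg Real.sqrt (Finset.sum_congr rfl fun i _ => by ring)
    have e3 : Real.sqrt (∑ i, (fun i => - A.mulVec v i) i ^ 2)
        = Real.sqrt (dotProduct (A.mulVec v) (A.mulVec v)) := by
      rw [dotProduct]
      exact congrArg Real.sqrt (Finset.sum_congr rfl fun i _ => by ring)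
    rw [e1]; rw [e2, e3] at h; exact h
  -- bound on ‖v‖
  have hvbound : Real.sqrt (dotProduct v v) ≤ (1 + σ) * n * μ / Cmin := by
    have habs : ∀ i, |v i| ≤ (x i * s i + σ * μ) / Cmin := by
      intro i
      simp only [hv]
      rw [abs_div, abs_of_pos (hspos i)]
      have h1 : |x i * s i - σ * μ| ≤ x i * s i + σ * μ := by
        have h2 : 0 ≤ x i * s i := le_of_lt (mul_pos (hxpos i) (hspos i))
        have h3 : 0 ≤ σ * μ := mul_nonneg (le_of_lt hσ.1) hμnn
        rw [abs_le]; constructor <;> nlinarith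
      have h2 : 0 ≤ x i * s i := le_of_lt (mul_pos (hxpos i) (hspos i))
      have h3 : 0 ≤ σ * μ := mul_nonneg (le_of_lt hσ.1) hμnn
      exact div_le_div₀ (by linarith) h1 hCmin (hs i).1
    have hl2l1 : Real.sqrt (dotProduct v v) ≤ ∑ i, |v i| := by
      rw [dotProduct]
      have e : ∑ i, v i * v i = ∑ i, |v i| ^ 2 := by
        exact Finset.sum_congr rfl fun i _ => by rw [sq_abs]; ring
      rw [e]
      calc Real.sqrt (∑ i, |v i| ^ 2) ≤ Real.sqrt ((∑ i, |v i|) ^ 2) :=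
            Real.sqrt_le_sqrt (Finset.sum_sq_le_sq_sum_of_nonneg fun i _ => abs_nonneg _)
        _ = ∑ i, |v i| := Real.sqrt_sq (Finset.sum_nonneg fun i _ => abs_nonneg _)
    calc Real.sqrt (dotProduct v v) ≤ ∑ i, |v i| := hl2l1
      _ ≤ ∑ i, (x i * s i + σ * μ) / Cmin :=
          Finset.sum_le_sum fun i _ => habs i
      _ = (dotProduct x s + n * (σ * μ)) / Cmin := by
          rw [← Finset.sum_div, Finset.sum_add_distrib, Finset.sum_const,
            Finset.card_univ, Fintype.card_fin, nsmul_eq_mul, dotProduct]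
      _ = (1 + σ) * n * μ / Cmin := by rw [← hnμ]; ring_nf
  -- combine
  have key : Cmin / Cmax * (lammin ^ 2 * t) ≤ a * (lammax * ((1 + σ) * n * μ / Cmin)) := by
    calc Cmin / Cmax * (lammin ^ 2 * t) ≤ ∑ i, x i * (s i)⁻¹ * u i ^ 2 := hlow
      _ = dotProduct dy (- A.mulVec v) := by rw [← hquad, heq]
      _ ≤ a * Real.sqrt (dotProduct (A.mulVec v) (A.mulVec v)) := hCS
      _ ≤ a * (lammax * Real.sqrt (dotProduct v v)) :=
          mul_le_mul_of_nonneg_left (hsing2 v) hann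
      _ ≤ a * (lammax * ((1 + σ) * n * μ / Cmin)) := by
          apply mul_le_mul_of_nonneg_left _ hann
          exact mul_le_mul_of_nonneg_left hvbound hlmax
  have hCmne : Cmin ≠ 0 := ne_of_gt hCmin
  have hCMne : Cmax ≠ 0 := ne_of_gt hCmax
  have key2 : Cmin ^ 2 * lammin ^ 2 * a ^ 2 ≤ Cmax * lammax * ((1 + σ) * n * μ) * a := by
    have hmul := mul_le_mul_of_nonneg_right key (le_of_lt (mul_pos hCmin hCmax))
    calc Cmin ^ 2 * lammin ^ 2 * a ^ 2
        = Cmin / Cmax * (lammin ^ 2 * t) * (Cmin * Cmax) := by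
          rw [ha2]; field_simp
      _ ≤ a * (lammax * ((1 + σ) * n * μ / Cmin)) * (Cmin * Cmax) := hmul
      _ = Cmax * lammax * ((1 + σ) * n * μ) * a := by field_simp
  rw [show Cmax * lammax / (Cmin ^ 2 * lammin ^ 2) * (1 + σ) * ↑n * μ
      = Cmax * lammax * ((1 + σ) * n * μ) / (Cmin ^ 2 * lammin ^ 2) by ring,
    le_div_iff₀ (by positivity)]
  rcases eq_or_lt_of_le hann with h | h
  · rw [← h]
    have : 0 ≤ Cmax * lammax * ((1 + σ) * ↑n * μ) := by
      have : (0:ℝ) ≤ 1 + σ := by linarith [hσ.1]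
      positivity
    linarith
  · nlinarith [key2, mul_pos (mul_pos hCmin hCmin) (mul_pos hlmin hlmin)]
end

section
/- In the continuation Newton iteration z_{k+1} = z_k + (Δt/(1+Δt)) Δz_k with J(z_k)Δz_k = −F_σμ(z_k), the trust-region ratio ρ_k satisfies |ρ_k − 1| ≤ (Δt/(1+Δt)) · ||ΔX_k ΔS_k e|| / ||X_k s_k − σ_k μ_k e||, where ρ_k = (||F(z_k)|| − ||F(z_k + Δz̃_k)||)/(||F(z_k)|| − ||F(z_k) + J(z_k)Δz̃_k||), Δz̃_k = (Δt/(1+Δt))Δz_k. -/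
lemma sqrt_dot_eq_norm {n : ℕ} (f : Fin n → ℝ) :
    Real.sqrt (dotProduct f f) = ‖(WithLp.equiv 2 (Fin n → ℝ)).symm f‖ := by
  rw [EuclideanSpace.norm_eq]
  congr 1
  simp [dotProduct, Real.norm_eq_abs, sq_abs, sq]

lemma norm_sub_norm_abs {n : ℕ} (f g : Fin n → ℝ) :
    |Real.sqrt (dotProduct f f) - Real.sqrt (dotProduct g g)|
      ≤ Real.sqrt (dotProduct (f - g) (f - g)) := by
  rw [sqrt_dot_eq_norm, sqrt_dot_eq_norm, sqrt_dot_eq_norm]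
  have : (WithLp.equiv 2 (Fin n → ℝ)).symm (f - g)
      = (WithLp.equiv 2 (Fin n → ℝ)).symm f - (WithLp.equiv 2 (Fin n → ℝ)).symm g := rfl
  rw [this]
  exact abs_norm_sub_norm_le _ _

lemma sqrt_dot_smul {n : ℕ} (c : ℝ) (hc : 0 ≤ c) (f : Fin n → ℝ) :
    Real.sqrt (dotProduct (fun i => c * f i) (fun i => c * f i))
      = c * Real.sqrt (dotProduct f f) := by
  have : dotProduct (fun i => c * f i) (fun i => c * f i)
      = (c * c) * dotProduct f f := by
    simp [dotProduct, Finset.mul_sum]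
    exact Finset.sum_congr rfl fun i _ => by ring
  rw [this, Real.sqrt_mul (by positivity), Real.sqrt_mul_self hc]

/-- Trust-region ratio estimate for the continuation Newton iteration
`z_{k+1} = z_k + (Δt/(1+Δt))Δz_k`: for a primal-dual feasible iterate, the ratio `ρ_k`
satisfies `|ρ_k − 1| ≤ (Δt/(1+Δt)) ‖ΔX_kΔS_ke‖ / ‖X_ks_k − σ_kμ_ke‖`. -/
theorem trust_region_ratio_bound {m n : ℕ} (A : Matrix (Fin m) (Fin n) ℝ)
    (b : Fin m → ℝ) (c : Fin n → ℝ)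
    (x dx s ds : Fin n → ℝ) (y dy : Fin m → ℝ) (σ μ Δt ρ : ℝ)
    (hΔt : 0 < Δt)
    (hfeas1 : A.mulVec x = b) (hfeas2 : A.transpose.mulVec y + s = c)
    (hN1 : A.mulVec dx = 0) (hN2 : A.transpose.mulVec dy + ds = 0)
    (hN3 : ∀ i, s i * dx i + x i * ds i = -(x i * s i - σ * μ))
    (rc : Fin n → ℝ) (hrc : rc = fun i => x i * s i - σ * μ)
    (hrcpos : 0 < Real.sqrt (dotProduct rc rc))
    (hρ : ρ = (Real.sqrt (dotProduct rc rc) -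
        Real.sqrt (dotProduct
          (fun i => (x i + Δt / (1 + Δt) * dx i) * (s i + Δt / (1 + Δt) * ds i) - σ * μ)
          (fun i => (x i + Δt / (1 + Δt) * dx i) * (s i + Δt / (1 + Δt) * ds i) - σ * μ))) /
      (Real.sqrt (dotProduct rc rc) -
        Real.sqrt (dotProduct (fun i => (1 - Δt / (1 + Δt)) * rc i)
          (fun i => (1 - Δt / (1 + Δt)) * rc i)))) :
    |ρ - 1| ≤ Δt / (1 + Δt) *
      Real.sqrt (dotProduct (fun i => dx i * ds i) (fun i => dx i * ds i)) /
        Real.sqrt (dotProduct rc rc) := by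
  have h1Δt : (0:ℝ) < 1 + Δt := by linarith
  set α : ℝ := Δt / (1 + Δt) with hαdef
  have hα0 : 0 < α := div_pos hΔt h1Δt
  have hα1 : α < 1 := by rw [hαdef, div_lt_one h1Δt]; linarith
  have h1α : (0:ℝ) < 1 - α := by linarith
  set Nr := Real.sqrt (dotProduct rc rc) with hNr
  set w : Fin n → ℝ := fun i => dx i * ds i with hw
  set Nw := Real.sqrt (dotProduct w w) with hNw
  set v : Fin n → ℝ := fun i => (x i + α * dx i) * (s i + α * ds i) - σ * μ with hv
  set Nv := Real.sqrt (dotProduct v v) with hNv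
  -- denominator simplification
  have hden : Real.sqrt (dotProduct (fun i => (1 - α) * rc i)
      (fun i => (1 - α) * rc i)) = (1 - α) * Nr := sqrt_dot_smul _ h1α.le rc
  -- key decomposition: v - (1-α)•rc = α²•w
  have hdiff : (v - fun i => (1 - α) * rc i) = fun i => α^2 * w i := by
    funext i
    simp only [hv, hw, Pi.sub_apply, hrc]
    linear_combination α * hN3 i
  have hkey : |Nv - (1 - α) * Nr| ≤ α^2 * Nw := by
    have h1 := norm_sub_norm_abs v (fun i => (1 - α) * rc i)
    rw [hden, hdiff, sqrt_dot_smul _ (by positivity) w] at h1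
    exact h1
  -- rewrite ρ
  have hNrpos : 0 < Nr := hrcpos
  have hρ2 : ρ = (Nr - Nv) / (α * Nr) := by
    rw [hρ, hden]
    congr 1
    ring
  have hρ1 : ρ - 1 = ((1 - α) * Nr - Nv) / (α * Nr) := by
    rw [hρ2, div_sub_one (by positivity : α * Nr ≠ 0)]
    congr 1
    ring
  rw [hρ1, abs_div, abs_of_pos (by positivity : (0:ℝ) < α * Nr)]
  rw [abs_sub_comm] at hkey
  calc |(1 - α) * Nr - Nv| / (α * Nr) ≤ (α^2 * Nw) / (α * Nr) := by
        apply div_le_div_of_nonneg_right hkey (by positivity) |>.trans_eq rfl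
      _ = α * Nw / Nr := by field_simp
end

section
/- If (x̃, ỹ, s̃) satisfies the KKT conditions of the reduced LP: R₁x̃ = b_r, R₁ᵀỹ + s̃ = c_r, x̃ᵢs̃ᵢ = 0 for all i, x̃, s̃ ≥ 0, where b_r = Q₁ᵀb, c_r = Pᵀc, and the constraints of the original problem are consistent (rank(A, b) = rank(A)), then (x, y, s) = (P x̃, Q₁ ỹ, P s̃) satisfies the KKT conditions of the original LP: Ax = b, Aᵀy + s = c, xᵢsᵢ = 0, x, s ≥ 0. -/
/-- Recovering a KKT point of the original LP from a KKT point of the reduced LP: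
if `(x̃, ỹ, s̃)` satisfies the KKT conditions of the reduced problem
(`R₁x̃ = Q₁ᵀb`, `R₁ᵀỹ + s̃ = Pᵀc`, complementarity, nonnegativity) and the original
constraints are consistent (`Q₁Q₁ᵀb = b`), then `(Px̃, Q₁ỹ, Ps̃)` satisfies the KKT
conditions of the original LP. -/
theorem reduced_kkt_recovers_original {m n r : ℕ} (A : Matrix (Fin m) (Fin n) ℝ)
    (b : Fin m → ℝ) (c : Fin n → ℝ)
    (Q1 : Matrix (Fin m) (Fin r) ℝ) (R1 : Matrix (Fin r) (Fin n) ℝ)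
    (π : Equiv.Perm (Fin n))
    (hQ : Q1.transpose * Q1 = 1)
    (hAP : A * π.permMatrix ℝ = Q1 * R1)
    (hR1rank : R1.rank = r)
    (hcons : Q1.mulVec (Q1.transpose.mulVec b) = b)
    (xt : Fin n → ℝ) (yt : Fin r → ℝ) (st : Fin n → ℝ)
    (h1 : R1.mulVec xt = Q1.transpose.mulVec b)
    (h2 : R1.transpose.mulVec yt + st = (π.permMatrix ℝ).transpose.mulVec c)
    (h3 : ∀ i, xt i * st i = 0)
    (h4 : 0 ≤ xt) (h5 : 0 ≤ st) :
    A.mulVec ((π.permMatrix ℝ).mulVec xt) = b ∧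
      A.transpose.mulVec (Q1.mulVec yt) + (π.permMatrix ℝ).mulVec st = c ∧
      (∀ i, ((π.permMatrix ℝ).mulVec xt) i * ((π.permMatrix ℝ).mulVec st) i = 0) ∧
      0 ≤ (π.permMatrix ℝ).mulVec xt ∧ 0 ≤ (π.permMatrix ℝ).mulVec st := by
  set P := π.permMatrix ℝ with hP
  have hPPt : P * P.transpose = 1 := by
    rw [hP, ← PEquiv.toMatrix_symm, ← PEquiv.toMatrix_trans, ← Equiv.toPEquiv_symm,
      ← Equiv.toPEquiv_trans]
    simp
  have hAeq : A = Q1 * R1 * P.transpose := by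
    calc A = A * (P * P.transpose) := by rw [hPPt, Matrix.mul_one]
    _ = A * P * P.transpose := by rw [Matrix.mul_assoc]
    _ = Q1 * R1 * P.transpose := by rw [hAP]
  have hv : ∀ (v : Fin n → ℝ) (i : Fin n), P.mulVec v i = v (π i) := by
    intro v i
    simp [hP, Matrix.mulVec, dotProduct, PEquiv.toMatrix_apply,
      Equiv.toPEquiv_apply]
  refine ⟨?_, ?_, ?_, ?_, ?_⟩
  · rw [Matrix.mulVec_mulVec, hAP, ← Matrix.mulVec_mulVec, h1, hcons]
  · have hAt : A.transpose = P * R1.transpose * Q1.transpose := by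
      rw [hAeq]; simp [Matrix.transpose_mul, Matrix.mul_assoc]
    rw [hAt, Matrix.mulVec_mulVec, Matrix.mul_assoc, Matrix.mul_assoc, hQ,
      Matrix.mul_one, ← Matrix.mulVec_mulVec, ← Matrix.mulVec_add, h2,
      Matrix.mulVec_mulVec, hPPt, Matrix.one_mulVec]
  · intro i; rw [hv, hv]; exact h3 (π i)
  · intro i; rw [hv]; exact h4 (π i)
  · intro i; rw [hv]; exact h5 (π i)
end
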